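/- For any prime p ≥ 5, H_{⌊p/6⌋} ≡ -2*q_p(2) - (3/2)*q_p(3) (mod p), where H_n is the n-th harmonic number and q_p(a) = (a^{p-1}-1)/p. -/

import Mathlib

open Finset

/-- First-order expansion of a product modulo ε² = 0. -/
private lemma prod_sub_expand {R : Type*} [CommRing R] (ε : R) (hε : ε * ε = 0)
    (s : Finset ℕ) (x y : ℕ → R) :
    ∏ k ∈ s, (x k - ε * y k)
      = ∏ k ∈ s, x k - ε * ∑ k ∈ s, (y k * ∏ j ∈ s.erase k, x j) := by
  classical
  induction s using Finset.induction_on with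
  | empty => simp
  | @insert a s ha ih =>
    rw [Finset.prod_insert ha, Finset.prod_insert ha, Finset.sum_insert ha, ih,
      Finset.erase_insert ha]
    have hsum : ∑ k ∈ s, (y k * ∏ j ∈ (insert a s).erase k, x j)
        = x a * ∑ k ∈ s, (y k * ∏ j ∈ s.erase k, x j) := by
      rw [Finset.mul_sum]
      refine Finset.sum_congr rfl fun k hk => ?_
      rw [Finset.erase_insert_of_ne (by rintro rfl; exact ha hk),
        Finset.prod_insert (fun h => ha (Finset.mem_of_mem_erase h))]
      ring
    rw [hsum]
    linear_combination (y a * ∑ k ∈ s, (y k * ∏ j ∈ s.erase k, x j)) * hε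

private lemma pkill (p : ℕ) (hp : 0 < p) (x : ZMod (p ^ 2))
    (h : (p : ZMod (p ^ 2)) * x = 0) :
    (ZMod.castHom (dvd_pow_self p two_ne_zero) (ZMod p)) x = 0 := by
  haveI : NeZero (p ^ 2) := ⟨pow_ne_zero _ hp.ne'⟩
  have hxv : ((x.val : ℕ) : ZMod (p ^ 2)) = x := by
    rw [ZMod.natCast_val, ZMod.cast_id]
  have h2 : ((p * x.val : ℕ) : ZMod (p ^ 2)) = 0 := by
    push_cast
    rw [hxv]; exact h
  have hdvd : p ^ 2 ∣ p * x.val := (ZMod.natCast_eq_zero_iff _ _).mp h2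
  obtain ⟨c, hc⟩ := hdvd
  have hpx : x.val = p * c := by
    have : p * x.val = p * (p * c) := by rw [hc]; ring
    exact Nat.eq_of_mul_eq_mul_left hp this
  rw [← hxv, map_natCast, hpx]
  push_cast
  rw [ZMod.natCast_self]
  ring

/-- Lerch-type formula: `∑_{k=1}^{p-1} ⌊ak/p⌋/k ≡ a·q_p(a) (mod p)`. -/
private lemma lerch (p a : ℕ) (hp : p.Prime) (hap : ¬ p ∣ a) (Q : ℤ)
    (hQ : (p : ℤ) * Q = (a : ℤ) ^ (p - 1) - 1) :
    ∑ k ∈ Finset.Icc 1 (p - 1), ((a * k / p : ℕ) : ZMod p) * (k : ZMod p)⁻¹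
      = (a : ZMod p) * (Q : ZMod p) := by
  classical
  haveI : Fact p.Prime := ⟨hp⟩
  have hp0 : 0 < p := hp.pos
  have hp2 : 2 ≤ p := hp.two_le
  have ha : (a : ZMod p) ≠ 0 := by
    rw [Ne, ZMod.natCast_eq_zero_iff]; exact hap
  set K := Finset.Icc 1 (p - 1) with hK
  have hmemK : ∀ k, k ∈ K ↔ 1 ≤ k ∧ k ≤ p - 1 := fun k => Finset.mem_Icc
  have hndvd : ∀ k ∈ K, ¬ p ∣ k := by
    intro k hk hdk
    rw [hmemK] at hk
    have := Nat.le_of_dvd (by omega) hdk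
    omega
  -- the inverse multiplier
  set a' : ℕ := ((a : ZMod p)⁻¹).val with ha'
  have haa' : (a * a') ≡ 1 [MOD p] := by
    have h1 : ((a * a' : ℕ) : ZMod p) = ((1 : ℕ) : ZMod p) := by
      push_cast [ha', ZMod.natCast_val, ZMod.cast_id]
      exact mul_inv_cancel₀ ha
    exact (ZMod.natCast_eq_natCast_iff _ _ _).mp h1
  have hap' : ¬ p ∣ a' := by
    intro hd
    have h0 : (a * a') % p = 1 % p := haa'
    have h1 : (a * a') % p = 0 := by
      have hd2 : p ∣ a * a' := Dvd.dvd.mul_left hd a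
      obtain ⟨c, hc⟩ := hd2
      rw [hc]
      exact Nat.mul_mod_right p c
    rw [h1] at h0
    rw [Nat.mod_eq_of_lt hp.one_lt] at h0
    exact one_ne_zero h0.symm
  -- step A: the product of residues a*k % p equals (p-1)!
  have hmod_mem : ∀ b k, ¬ p ∣ b → k ∈ K → b * k % p ∈ K := by
    intro b k hb hk
    rw [hmemK]
    have h1 : b * k % p < p := Nat.mod_lt _ hp0
    have h2 : b * k % p ≠ 0 := by
      intro h0
      have : p ∣ b * k := Nat.dvd_of_mod_eq_zero h0
      rcases (Nat.Prime.dvd_mul hp).mp this with h | h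
      · exact hb h
      · exact hndvd k hk h
    omega
  have hinv : ∀ b b' k, (b * b') ≡ 1 [MOD p] → k ∈ K → b' * (b * k % p) % p = k := by
    intro b b' k hbb' hk
    have h1 : b' * (b * k % p) ≡ b' * (b * k) [MOD p] := (Nat.mod_modEq _ p).mul_left b'
    have h2 : b' * (b * k) = (b * b') * k := by ring
    have h3 : (b * b') * k ≡ 1 * k [MOD p] := hbb'.mul_right k
    have h4 : b' * (b * k % p) ≡ k [MOD p] := by
      rw [h2] at h1
      refine h1.trans (h3.trans ?_)
      rw [one_mul]
    have := h4
    unfold Nat.ModEq at this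
    rw [this, Nat.mod_eq_of_lt (by rw [hmemK] at hk; omega)]
  have haa'' : (a' * a) ≡ 1 [MOD p] := by rwa [Nat.mul_comm]
  have hperm : ∏ k ∈ K, (a * k % p) = ∏ k ∈ K, k := by
    refine Finset.prod_nbij' (fun k => a * k % p) (fun k => a' * k % p)
      (fun k hk => hmod_mem a k hap hk) (fun k hk => hmod_mem a' k hap' hk)
      (fun k hk => hinv a a' k haa' hk) (fun k hk => ?_) (fun k _ => rfl)
    have : a * (a' * k % p) % p = k := hinv a' a k haa'' hk
    exact this
  -- move to ZMod (p^2)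
  have hpp : ((p : ZMod (p ^ 2)) * (p : ZMod (p ^ 2))) = 0 := by
    have : ((p ^ 2 : ℕ) : ZMod (p ^ 2)) = 0 := ZMod.natCast_self _
    push_cast at this
    linear_combination this
  have hcastprod : (∏ k ∈ K, ((a * k % p : ℕ) : ZMod (p ^ 2))) = ∏ k ∈ K, (k : ZMod (p ^ 2)) := by
    rw [← Nat.cast_prod, ← Nat.cast_prod, hperm]
  have hfac : ∀ k ∈ K, ((a * k % p : ℕ) : ZMod (p ^ 2))
      = (a : ZMod (p ^ 2)) * k - (p : ZMod (p ^ 2)) * ((a * k / p : ℕ) : ZMod (p ^ 2)) := by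
    intro k _
    have h1 : p * (a * k / p) + a * k % p = a * k := Nat.div_add_mod (a * k) p
    have h2 : ((p * (a * k / p) + a * k % p : ℕ) : ZMod (p ^ 2)) = ((a * k : ℕ) : ZMod (p ^ 2)) := by
      rw [h1]
    push_cast at h2
    linear_combination h2
  rw [Finset.prod_congr rfl hfac] at hcastprod
  rw [prod_sub_expand _ hpp] at hcastprod
  set P2 : ZMod (p ^ 2) := ∏ k ∈ K, (k : ZMod (p ^ 2)) with hP2
  have hcardK : K.card = p - 1 := by rw [hK, Nat.card_Icc]; omega
  have hprodax : ∏ k ∈ K, ((a : ZMod (p ^ 2)) * k) = (a : ZMod (p ^ 2)) ^ (p - 1) * P2 := by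
    rw [Finset.prod_mul_distrib, Finset.prod_const, hcardK, hP2]
  have herase : ∀ k ∈ K, ∏ j ∈ K.erase k, ((a : ZMod (p ^ 2)) * j)
      = (a : ZMod (p ^ 2)) ^ (p - 2) * ∏ j ∈ K.erase k, (j : ZMod (p ^ 2)) := by
    intro k hk
    rw [Finset.prod_mul_distrib, Finset.prod_const, Finset.card_erase_of_mem hk, hcardK,
      show p - 1 - 1 = p - 2 by omega]
  rw [hprodax, Finset.sum_congr rfl (fun k hk => by rw [herase k hk])] at hcastprod
  set SS2 : ZMod (p ^ 2) := ∑ k ∈ K, ((a * k / p : ℕ) : ZMod (p ^ 2)) * ∏ j ∈ K.erase k, (j : ZMod (p ^ 2)) with hSS2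
  have hsum2 : ∑ k ∈ K, (((a * k / p : ℕ) : ZMod (p ^ 2)) * ((a : ZMod (p ^ 2)) ^ (p - 2) * ∏ j ∈ K.erase k, (j : ZMod (p ^ 2))))
      = (a : ZMod (p ^ 2)) ^ (p - 2) * SS2 := by
    rw [hSS2, Finset.mul_sum]
    exact Finset.sum_congr rfl fun k _ => by ring
  rw [hsum2] at hcastprod
  -- hcastprod : a^(p-1) * P2 - p * (a^(p-2) * SS2) = P2
  have hQcast : ((a : ZMod (p ^ 2)) ^ (p - 1) - 1) = (p : ZMod (p ^ 2)) * (Q : ZMod (p ^ 2)) := by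
    have := congrArg (fun z : ℤ => (z : ZMod (p ^ 2))) hQ
    push_cast at this
    linear_combination -this
  have hker : (p : ZMod (p ^ 2)) * ((a : ZMod (p ^ 2)) ^ (p - 2) * SS2 - (Q : ZMod (p ^ 2)) * P2) = 0 := by
    linear_combination P2 * hQcast - hcastprod
  have h0 := pkill p hp0 _ hker
  rw [map_sub, map_mul, map_mul, map_pow, map_natCast, map_intCast, map_sum] at h0
  have hEerase : ∀ k ∈ K, (ZMod.castHom (dvd_pow_self p two_ne_zero) (ZMod p))
      (((a * k / p : ℕ) : ZMod (p ^ 2)) * ∏ j ∈ K.erase k, (j : ZMod (p ^ 2)))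
      = ((a * k / p : ℕ) : ZMod p) * ∏ j ∈ K.erase k, (j : ZMod p) := by
    intro k _
    rw [map_mul, map_natCast, map_prod]
    congr 1
    exact Finset.prod_congr rfl fun j _ => by rw [map_natCast]
  rw [Finset.sum_congr rfl hEerase, map_prod] at h0
  have hPmap : ∀ x, (ZMod.castHom (dvd_pow_self p two_ne_zero) (ZMod p)) ((x : ℕ) : ZMod (p ^ 2)) = ((x : ℕ) : ZMod p) :=
    fun x => map_natCast _ x
  rw [Finset.prod_congr rfl (fun j (_ : j ∈ K) => hPmap j)] at h0
  set P1 : ZMod p := ∏ k ∈ K, (k : ZMod p) with hP1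
  have hk0 : ∀ k ∈ K, (k : ZMod p) ≠ 0 := by
    intro k hk
    rw [Ne, ZMod.natCast_eq_zero_iff]
    exact hndvd k hk
  have hP1ne : P1 ≠ 0 := Finset.prod_ne_zero_iff.mpr hk0
  set E : ZMod p := ∑ k ∈ K, ((a * k / p : ℕ) : ZMod p) * (k : ZMod p)⁻¹ with hE
  have hEP : ∑ k ∈ K, ((a * k / p : ℕ) : ZMod p) * ∏ j ∈ K.erase k, (j : ZMod p) = E * P1 := by
    rw [hE, Finset.sum_mul]
    refine Finset.sum_congr rfl fun k hk => ?_
    have h1 : (k : ZMod p) * ∏ j ∈ K.erase k, (j : ZMod p) = P1 := Finset.mul_prod_erase K _ hk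
    field_simp [hk0 k hk]
    linear_combination ((a * k / p : ℕ) : ZMod p) * h1
  rw [hEP] at h0
  -- h0 : a^(p-2) * (E * P1) - Q * P1 = 0
  have hEQ : (a : ZMod p) ^ (p - 2) * E = (Q : ℤ) := by
    have h1 : ((a : ZMod p) ^ (p - 2) * E) * P1 = ((Q : ℤ) : ZMod p) * P1 := by
      linear_combination h0
    exact mul_right_cancel₀ hP1ne h1
  have hpow : (a : ZMod p) ^ (p - 1) = 1 := ZMod.pow_card_sub_one_eq_one ha
  have hsplit : (a : ZMod p) ^ (p - 1) = (a : ZMod p) * (a : ZMod p) ^ (p - 2) := by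
    rw [← pow_succ']
    congr 1
    omega
  calc E = ((a : ZMod p) ^ (p - 1)) * E := by rw [hpow, one_mul]
    _ = (a : ZMod p) * ((a : ZMod p) ^ (p - 2) * E) := by rw [hsplit]; ring
    _ = (a : ZMod p) * (Q : ZMod p) := by rw [hEQ]

private lemma sum_inv_all (p : ℕ) (hp : p.Prime) (hodd : p % 2 = 1) :
    ∑ k ∈ Finset.Icc 1 (p - 1), (k : ZMod p)⁻¹ = 0 := by
  haveI : Fact p.Prime := ⟨hp⟩
  have hp2 : 2 ≤ p := hp.two_le
  have hrefl : ∑ k ∈ Finset.Icc 1 (p - 1), (k : ZMod p)⁻¹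
      = ∑ k ∈ Finset.Icc 1 (p - 1), (-(k : ZMod p))⁻¹ := by
    refine Finset.sum_nbij' (fun k => p - k) (fun k => p - k) ?_ ?_ ?_ ?_ ?_
    · intro k hk; simp only [Finset.mem_Icc] at hk ⊢; omega
    · intro k hk; simp only [Finset.mem_Icc] at hk ⊢; omega
    · intro k hk; simp only [Finset.mem_Icc] at hk; show p - (p - k) = k; omega
    · intro k hk; simp only [Finset.mem_Icc] at hk; show p - (p - k) = k; omega
    · intro k hk
      rw [Finset.mem_Icc] at hk
      have h1 : ((p - k : ℕ) : ZMod p) = -(k : ZMod p) := by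
        have : ((p - k : ℕ) : ZMod p) + (k : ZMod p) = ((p : ℕ) : ZMod p) := by
          rw [← Nat.cast_add]
          congr 1
          omega
        rw [ZMod.natCast_self] at this
        linear_combination this
      rw [h1, neg_neg]
  have h2 : ∑ k ∈ Finset.Icc 1 (p - 1), (-(k : ZMod p))⁻¹
      = -∑ k ∈ Finset.Icc 1 (p - 1), (k : ZMod p)⁻¹ := by
    rw [← Finset.sum_neg_distrib]
    exact Finset.sum_congr rfl fun k _ => by rw [inv_neg]
  set S := ∑ k ∈ Finset.Icc 1 (p - 1), (k : ZMod p)⁻¹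
  have h3 : S = -S := hrefl.trans h2
  have h4 : (2 : ZMod p) * S = 0 := by linear_combination h3
  have h20 : (2 : ZMod p) ≠ 0 := by
    have : ((2 : ℕ) : ZMod p) ≠ 0 := by
      rw [Ne, ZMod.natCast_eq_zero_iff]
      intro h
      have := Nat.le_of_dvd (by norm_num) h
      omega
    simpa using this
  rcases mul_eq_zero.mp h4 with h | h
  · exact absurd h h20
  · exact h

private lemma sum_inv_refl (p m : ℕ) (hp : p.Prime) (hodd : p % 2 = 1) (hm : 2 * m + 1 ≤ p) :
    ∑ k ∈ Finset.Icc 1 (p - 1 - m), (k : ZMod p)⁻¹ = ∑ k ∈ Finset.Icc 1 m, (k : ZMod p)⁻¹ := by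
  haveI : Fact p.Prime := ⟨hp⟩
  have hp2 : 2 ≤ p := hp.two_le
  have hcast : ∀ k, 1 ≤ k → k ≤ p - 1 → ((p - k : ℕ) : ZMod p) = -(k : ZMod p) := by
    intro k h1 h2
    have h3 : ((p - k : ℕ) : ZMod p) + (k : ZMod p) = ((p : ℕ) : ZMod p) := by
      rw [← Nat.cast_add]; congr 1; omega
    rw [ZMod.natCast_self] at h3
    linear_combination h3
  have hsplit : ∑ k ∈ Finset.Ioc 0 (p - 1 - m), (k : ZMod p)⁻¹
      + ∑ k ∈ Finset.Ioc (p - 1 - m) (p - 1), (k : ZMod p)⁻¹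
      = ∑ k ∈ Finset.Ioc 0 (p - 1), (k : ZMod p)⁻¹ :=
    Finset.sum_Ioc_consecutive _ (by omega) (by omega)
  have htail : ∑ k ∈ Finset.Ioc (p - 1 - m) (p - 1), (k : ZMod p)⁻¹
      = ∑ j ∈ Finset.Icc 1 m, -(j : ZMod p)⁻¹ := by
    refine Finset.sum_nbij' (fun k => p - k) (fun j => p - j) ?_ ?_ ?_ ?_ ?_
    · intro k hk; simp only [Finset.mem_Ioc, Finset.mem_Icc] at hk ⊢; omega
    · intro j hj; simp only [Finset.mem_Ioc, Finset.mem_Icc] at hj ⊢; omega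
    · intro k hk; simp only [Finset.mem_Ioc] at hk; show p - (p - k) = k; omega
    · intro j hj; simp only [Finset.mem_Icc] at hj; show p - (p - j) = j; omega
    · intro k hk
      simp only [Finset.mem_Ioc] at hk
      show (k : ZMod p)⁻¹ = -((p - k : ℕ) : ZMod p)⁻¹
      rw [hcast k (by omega) (by omega), inv_neg, neg_neg]
  have hall : ∑ k ∈ Finset.Ioc 0 (p - 1), (k : ZMod p)⁻¹ = 0 := by
    rw [← Finset.Icc_add_one_left_eq_Ioc]
    exact sum_inv_all p hp hodd
  have htail2 : ∑ j ∈ Finset.Icc 1 m, -(j : ZMod p)⁻¹ = -∑ j ∈ Finset.Icc 1 m, (j : ZMod p)⁻¹ := by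
    simp
  rw [htail2] at htail
  have hIoc : ∀ x : ℕ, Finset.Icc 1 x = Finset.Ioc 0 x := fun x => by
    ext t; simp only [Finset.mem_Icc, Finset.mem_Ioc]; omega
  rw [htail, hall] at hsplit
  rw [hIoc (p - 1 - m)]
  linear_combination hsplit

private lemma floor_id (p k : ℕ) (hp2 : p % 2 = 1) (hp3 : p % 3 ≠ 0) (hp5 : 5 ≤ p)
    (hk1 : 1 ≤ k) (hk : k ≤ p - 1) :
    6 * k / p + (if k ≤ p / 6 then 1 else 0) + (if k ≤ p - 1 - p / 6 then 1 else 0)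
      = 2 + 3 * k / p + 2 * k / p := by
  have hp0 : 0 < p := by omega
  have hq3 : 3 * k / p = 6 * k / p / 2 := by
    rw [Nat.div_div_eq_div_mul, show 6 * k = 3 * k * 2 by ring, Nat.mul_div_mul_right _ _ (by norm_num)]
  have hq2 : 2 * k / p = 6 * k / p / 3 := by
    rw [Nat.div_div_eq_div_mul, show 6 * k = 2 * k * 3 by ring, Nat.mul_div_mul_right _ _ (by norm_num)]
  have hub : 6 * k / p < 6 := Nat.div_lt_of_lt_mul (by omega)
  have h0 : 6 * k / p = 0 ↔ 6 * k < p := by rw [Nat.div_eq_zero_iff]; omega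
  have h5 : 5 ≤ 6 * k / p ↔ 5 * p ≤ 6 * k := Nat.le_div_iff_mul_le hp0
  have hm : k ≤ p / 6 ↔ k * 6 ≤ p := Nat.le_div_iff_mul_le (by norm_num)
  have hm6 : p / 6 * 6 ≤ p ∧ p < p / 6 * 6 + 6 := ⟨Nat.div_mul_le_self p 6, by omega⟩
  rw [hq3, hq2]
  generalize hgen : 6 * k / p = q at h0 h5 hub ⊢
  split_ifs <;> omega

private lemma key (p : ℕ) (hp : p.Prime) (hp5 : 5 ≤ p) (Q2 Q3 : ℤ)
    (h2 : (p : ℤ) * Q2 = 2 ^ (p - 1) - 1) (h3 : (p : ℤ) * Q3 = 3 ^ (p - 1) - 1) :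
    2 * (∑ k ∈ Finset.Icc 1 (p / 6), (k : ZMod p)⁻¹) + 4 * (Q2 : ZMod p) + 3 * (Q3 : ZMod p) = 0 := by
  haveI : Fact p.Prime := ⟨hp⟩
  have hp2 : 2 ≤ p := hp.two_le
  have hodd : p % 2 = 1 := by
    have h := hp.eq_one_or_self_of_dvd 2
    by_contra hc
    have h2 : (2 : ℕ) ∣ p := by omega
    rcases h h2 with h' | h' <;> omega
  have h3p : p % 3 ≠ 0 := by
    intro hc
    have h3 : (3 : ℕ) ∣ p := by omega
    rcases hp.eq_one_or_self_of_dvd 3 h3 with h' | h' <;> omega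
  have hnd2 : ¬ p ∣ 2 := fun h => by have := Nat.le_of_dvd (by norm_num) h; omega
  have hnd3 : ¬ p ∣ 3 := fun h => by have := Nat.le_of_dvd (by norm_num) h; omega
  have hnd6 : ¬ p ∣ 6 := by
    intro h
    have := Nat.le_of_dvd (by norm_num) h
    interval_cases p
    · exact absurd h (by norm_num)
    · exact absurd hp (by norm_num)
  have h6 : (p : ℤ) * (Q2 + Q3 + p * Q2 * Q3) = 6 ^ (p - 1) - 1 := by
    have e : (p : ℤ) * (Q2 + Q3 + p * Q2 * Q3) = (p * Q2) + (p * Q3) + (p * Q2) * (p * Q3) := by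
      ring
    rw [e, h2, h3, show (6 : ℤ) = 2 * 3 by norm_num, mul_pow]
    ring
  have E2 := lerch p 2 hp hnd2 Q2 (by exact_mod_cast h2)
  have E3 := lerch p 3 hp hnd3 Q3 (by exact_mod_cast h3)
  have E6 := lerch p 6 hp hnd6 (Q2 + Q3 + p * Q2 * Q3) (by exact_mod_cast h6)
  have hsum : ∑ k ∈ Finset.Icc 1 (p - 1), (((6 * k / p : ℕ) : ZMod p) * (k : ZMod p)⁻¹
        + (if k ≤ p / 6 then (k : ZMod p)⁻¹ else 0)
        + (if k ≤ p - 1 - p / 6 then (k : ZMod p)⁻¹ else 0))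
      = ∑ k ∈ Finset.Icc 1 (p - 1), ((2 : ZMod p) * (k : ZMod p)⁻¹
        + ((3 * k / p : ℕ) : ZMod p) * (k : ZMod p)⁻¹
        + ((2 * k / p : ℕ) : ZMod p) * (k : ZMod p)⁻¹) := by
    refine Finset.sum_congr rfl fun k hk => ?_
    simp only [Finset.mem_Icc] at hk
    have hid := floor_id p k hodd h3p hp5 hk.1 hk.2
    have hcast := congrArg (fun n : ℕ => (n : ZMod p)) hid
    push_cast at hcast
    split_ifs at hcast ⊢ <;> linear_combination (k : ZMod p)⁻¹ * hcast
  have hfil : ∀ m, m ≤ p - 1 →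
      ∑ k ∈ Finset.Icc 1 (p - 1), (if k ≤ m then (k : ZMod p)⁻¹ else 0)
        = ∑ k ∈ Finset.Icc 1 m, (k : ZMod p)⁻¹ := by
    intro m hm
    rw [← Finset.sum_filter]
    congr 1
    ext t
    simp only [Finset.mem_filter, Finset.mem_Icc]
    omega
  simp only [Finset.sum_add_distrib] at hsum
  rw [hfil (p / 6) (by omega), hfil (p - 1 - p / 6) (by omega)] at hsum
  rw [← Finset.mul_sum, sum_inv_all p hp hodd,
    sum_inv_refl p (p / 6) hp hodd (by omega)] at hsum
  rw [E2, E3, E6] at hsum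
  push_cast at hsum ⊢
  rw [ZMod.natCast_self] at hsum
  linear_combination hsum

theorem harmonic_sixth_cong (p : ℕ) (hp : p.Prime) (hp5 : 5 ≤ p) :
    (p : ℤ) ∣ ((∑ i ∈ Finset.Icc 1 (p / 6), (1 : ℚ) / i)
      - (-2 * ((2 ^ (p - 1) - 1 : ℚ) / p) - (3 / 2) * ((3 ^ (p - 1) - 1 : ℚ) / p))).num := by
  haveI : Fact p.Prime := ⟨hp⟩
  have hp0 : (p : ℚ) ≠ 0 := by
    simp only [ne_eq, Nat.cast_eq_zero]
    omega
  have hne : ∀ a : ℕ, 2 ≤ a → a ≤ 4 → (a : ZMod p) ≠ 0 := by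
    intro a ha1 ha2 h
    have h' : ((a : ℕ) : ZMod p) = 0 := by exact_mod_cast h
    rw [ZMod.natCast_eq_zero_iff] at h'
    have := Nat.le_of_dvd (by omega) h'
    omega
  have h2ne : (2 : ZMod p) ≠ 0 := by
    have := hne 2 (by norm_num) (by norm_num)
    simpa using this
  have h3ne : (3 : ZMod p) ≠ 0 := by
    have := hne 3 (by norm_num) (by norm_num)
    simpa using this
  have hdvd2 : (p : ℤ) ∣ 2 ^ (p - 1) - 1 := by
    rw [← ZMod.intCast_zmod_eq_zero_iff_dvd]
    push_cast
    rw [ZMod.pow_card_sub_one_eq_one h2ne]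
    ring
  have hdvd3 : (p : ℤ) ∣ 3 ^ (p - 1) - 1 := by
    rw [← ZMod.intCast_zmod_eq_zero_iff_dvd]
    push_cast
    rw [ZMod.pow_card_sub_one_eq_one h3ne]
    ring
  obtain ⟨Q2, hQ2⟩ := hdvd2
  obtain ⟨Q3, hQ3⟩ := hdvd3
  set m := p / 6 with hm
  have hmp : m ≤ p - 1 := by omega
  have hfacne : (m.factorial : ℚ) ≠ 0 := by
    simp [Nat.factorial_ne_zero]
  have hidvd : ∀ i ∈ Finset.Icc 1 m, i * (m.factorial / i) = m.factorial := by
    intro i hi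
    simp only [Finset.mem_Icc] at hi
    exact Nat.mul_div_cancel' (Nat.dvd_factorial (by omega) hi.2)
  have hsum_eq : (∑ i ∈ Finset.Icc 1 m, (1 : ℚ) / i)
      = ((∑ i ∈ Finset.Icc 1 m, ((m.factorial / i : ℕ) : ℤ)) : ℚ) / (m.factorial : ℚ) := by
    push_cast
    rw [Finset.sum_div]
    refine Finset.sum_congr rfl fun i hi => ?_
    have h1 := hidvd i hi
    simp only [Finset.mem_Icc] at hi
    have hi0 : (i : ℚ) ≠ 0 := by
      simp only [ne_eq, Nat.cast_eq_zero]; omega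
    rw [div_eq_div_iff hi0 hfacne, one_mul]
    norm_cast
    rw [mul_comm] at h1
    exact h1.symm
  set N : ℤ := 2 * (∑ i ∈ Finset.Icc 1 m, ((m.factorial / i : ℕ) : ℤ))
      + (4 * Q2 + 3 * Q3) * (m.factorial : ℤ) with hN
  set D : ℤ := 2 * (m.factorial : ℤ) with hD
  have hDne : (D : ℚ) ≠ 0 := by
    rw [hD]
    push_cast
    positivity
  have e2 : (2 ^ (p - 1) - 1 : ℚ) = (p : ℚ) * (Q2 : ℚ) := by exact_mod_cast hQ2
  have e3 : (3 ^ (p - 1) - 1 : ℚ) = (p : ℚ) * (Q3 : ℚ) := by exact_mod_cast hQ3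
  have hrepr : (∑ i ∈ Finset.Icc 1 (p / 6), (1 : ℚ) / i)
      - (-2 * ((2 ^ (p - 1) - 1 : ℚ) / p) - (3 / 2) * ((3 ^ (p - 1) - 1 : ℚ) / p))
      = (N : ℚ) / (D : ℚ) := by
    rw [← hm, hsum_eq, e2, e3, hN, hD]
    push_cast
    field_simp
    ring
  set r : ℚ := (∑ i ∈ Finset.Icc 1 (p / 6), (1 : ℚ) / i)
      - (-2 * ((2 ^ (p - 1) - 1 : ℚ) / p) - (3 / 2) * ((3 ^ (p - 1) - 1 : ℚ) / p)) with hr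
  have hcross : r.num * D = N * (r.den : ℤ) := by
    have h1 : (r.num : ℚ) / (r.den : ℚ) = (N : ℚ) / (D : ℚ) := by
      rw [Rat.num_div_den]; exact hrepr
    have hden : ((r.den : ℤ) : ℚ) ≠ 0 := by
      simp [Rat.den_ne_zero]
    rw [div_eq_div_iff (by exact_mod_cast hden) hDne] at h1
    exact_mod_cast h1
  have hpN : (p : ℤ) ∣ N := by
    rw [← ZMod.intCast_zmod_eq_zero_iff_dvd]
    have hterm : ∀ i ∈ Finset.Icc 1 m, (((m.factorial / i : ℕ) : ℤ) : ZMod p)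
        = (i : ZMod p)⁻¹ * (m.factorial : ZMod p) := by
      intro i hi
      have h1 := hidvd i hi
      simp only [Finset.mem_Icc] at hi
      have hi0 : (i : ZMod p) ≠ 0 := by
        intro h
        rw [ZMod.natCast_eq_zero_iff] at h
        have := Nat.le_of_dvd (by omega) h
        omega
      have h2 : (i : ZMod p) * ((m.factorial / i : ℕ) : ZMod p) = (m.factorial : ZMod p) := by
        exact_mod_cast congrArg (fun n : ℕ => (n : ZMod p)) h1
      rw [Int.cast_natCast, ← h2, inv_mul_cancel_left₀ hi0]
    have hSsum : ((∑ i ∈ Finset.Icc 1 m, ((m.factorial / i : ℕ) : ℤ) : ℤ) : ZMod p)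
        = (∑ i ∈ Finset.Icc 1 m, (i : ZMod p)⁻¹) * (m.factorial : ZMod p) := by
      rw [Int.cast_sum, Finset.sum_congr rfl hterm, ← Finset.sum_mul]
    have hkey := key p hp hp5 Q2 Q3 hQ2.symm hQ3.symm
    rw [← hm] at hkey
    rw [hN, Int.cast_add, Int.cast_mul, Int.cast_mul, Int.cast_natCast, hSsum]
    push_cast
    linear_combination (m.factorial : ZMod p) * hkey
  have hprime : Prime (p : ℤ) := Nat.prime_iff_prime_int.mp hp
  have hdd : (p : ℤ) ∣ r.num * D := by
    rw [hcross]
    exact Dvd.dvd.mul_right hpN _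
  rcases hprime.dvd_mul.mp hdd with h | h
  · exact h
  · exfalso
    rw [hD] at h
    rcases hprime.dvd_mul.mp h with h' | h'
    · have := Int.le_of_dvd (by norm_num) h'
      omega
    · have h'' : p ∣ m.factorial := by exact_mod_cast h'
      have := (Nat.Prime.dvd_factorial hp).mp h''
      omega
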